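/- Let e and f be real numbers with f ≥ e ≥ 0, and let (c_{n,k}(q))_{n,k ≥ 0} be defined by c_{0,0}(q) = 1, c_{n,k}(q) = 0 unless n ≥ k ≥ 0, and for n ≥ 1 by c_{n,0}(q) = ((f − e) + e q)·c_{n−1,0}(q) + f q·c_{n−1,1}(q) and, for k ≥ 1, c_{n,k}(q) = c_{n−1,k−1}(q) + (1 + q)·c_{n−1,k}(q) + q·c_{n−1,k+1}(q). Then the Hankel matrix (c_{i+j,0}(q))_{i,j ≥ 0} is q-totally positive: every minor (determinant of a k × k submatrix with strictly increasing row indices and strictly increasing column indices) is a polynomial in q with nonnegative real coefficients. -/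

import Mathlib

open Polynomial Matrix Finset Equiv Equiv.Perm

namespace HankelAux

/-- q-nonnegative polynomial -/
def QN (p : Polynomial ℝ) : Prop := ∀ m, 0 ≤ p.coeff m

lemma QN_zero : QN 0 := fun m => by simp
lemma QN_one : QN 1 := fun m => by
  rcases eq_or_ne m 0 with rfl | h <;> simp [Polynomial.coeff_one, *]
lemma QN_X : QN Polynomial.X := fun m => by
  rcases eq_or_ne m 1 with rfl | h
  · simp
  · simp [Polynomial.coeff_X, Ne.symm h]
lemma QN_C {r : ℝ} (hr : 0 ≤ r) : QN (Polynomial.C r) := fun m => by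
  rcases eq_or_ne m 0 with rfl | h <;> simp [Polynomial.coeff_C, *]
lemma QN.add {p q : Polynomial ℝ} (hp : QN p) (hq : QN q) : QN (p + q) := fun m => by
  simpa using add_nonneg (hp m) (hq m)
lemma QN.mul {p q : Polynomial ℝ} (hp : QN p) (hq : QN q) : QN (p * q) := fun m => by
  rw [Polynomial.coeff_mul]
  exact Finset.sum_nonneg fun x _ => mul_nonneg (hp x.1) (hq x.2)
lemma QN_sum {α : Type*} (s : Finset α) (g : α → Polynomial ℝ) (h : ∀ a ∈ s, QN (g a)) :
    QN (∑ a ∈ s, g a) := by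
  classical
  induction s using Finset.induction_on with
  | empty => simpa using QN_zero
  | insert _ _ hx ih =>
    rename_i a s'
    rw [Finset.sum_insert hx]
    exact (h a (Finset.mem_insert_self a s')).add (ih fun b hb => h b (Finset.mem_insert_of_mem hb))
lemma QN_prod {α : Type*} (s : Finset α) (g : α → Polynomial ℝ) (h : ∀ a ∈ s, QN (g a)) :
    QN (∏ a ∈ s, g a) := by
  classical
  induction s using Finset.induction_on with
  | empty => simpa using QN_one
  | insert _ _ hx ih =>
    rename_i a s'
    rw [Finset.prod_insert hx]
    exact (h a (Finset.mem_insert_self a s')).mul (ih fun b hb => h b (Finset.mem_insert_of_mem hb))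
lemma QN_pow {p : Polynomial ℝ} (hp : QN p) (n : ℕ) : QN (p ^ n) := by
  induction n with
  | zero => simpa using QN_one
  | succ n ih => rw [pow_succ]; exact ih.mul hp


variable {R : Type*} [CommRing R]

local notation "ε " σ:arg => ((Equiv.Perm.sign σ : ℤ) : R)

theorem cauchy_binet {s t : ℕ} (A : Matrix (Fin s) (Fin t) R) (B : Matrix (Fin t) (Fin s) R) :
    Matrix.det (Matrix.of fun u v => ∑ j, A u j * B j v) =
      ∑ g ∈ Finset.univ.filter (fun g : Fin s → Fin t => StrictMono g),
        Matrix.det (A.submatrix id g) * Matrix.det (B.submatrix g id) := by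
  classical
  have step1 : Matrix.det (Matrix.of fun u v => ∑ j, A u j * B j v) =
      ∑ p : Fin s → Fin t, (∏ u, B (p u) u) * Matrix.det (A.submatrix id p) := by
    calc Matrix.det (Matrix.of fun u v => ∑ j, A u j * B j v)
        = ∑ σ : Perm (Fin s), ε σ * ∏ u, ∑ j, A (σ u) j * B j u := by
          rw [Matrix.det_apply']; rfl
      _ = ∑ σ : Perm (Fin s), ∑ p : Fin s → Fin t,
            ε σ * ∏ u, (A (σ u) (p u) * B (p u) u) := by
          simp only [Finset.prod_univ_sum, Fintype.piFinset_univ, Finset.mul_sum]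
      _ = ∑ p : Fin s → Fin t, ∑ σ : Perm (Fin s),
            ε σ * ∏ u, (A (σ u) (p u) * B (p u) u) := Finset.sum_comm
      _ = ∑ p : Fin s → Fin t, (∏ u, B (p u) u) * Matrix.det (A.submatrix id p) := by
          refine Finset.sum_congr rfl fun p _ => ?_
          rw [Matrix.det_apply', Finset.mul_sum]
          refine Finset.sum_congr rfl fun σ _ => ?_
          simp only [Finset.prod_mul_distrib, Matrix.submatrix_apply, id_eq]
          ring
  have step2 : (∑ p : Fin s → Fin t, (∏ u, B (p u) u) * Matrix.det (A.submatrix id p)) =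
      ∑ p ∈ Finset.univ.filter (fun p : Fin s → Fin t => Function.Injective p),
        (∏ u, B (p u) u) * Matrix.det (A.submatrix id p) := by
    refine (Finset.sum_subset (Finset.filter_subset _ _) fun p _ hp => ?_).symm
    have hp' : ¬ Function.Injective p := by simpa using hp
    rw [Function.Injective] at hp'
    push_neg at hp'
    obtain ⟨u, v, huv, hne⟩ := hp'
    rw [Matrix.det_zero_of_column_eq hne fun k => by
      simp [Matrix.submatrix_apply, huv], mul_zero]
  have step3 : (∑ p ∈ Finset.univ.filter (fun p : Fin s → Fin t => Function.Injective p),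
        (∏ u, B (p u) u) * Matrix.det (A.submatrix id p)) =
      ∑ gσ ∈ (Finset.univ.filter (fun g : Fin s → Fin t => StrictMono g)) ×ˢ
          (Finset.univ : Finset (Perm (Fin s))),
        (∏ u, B (gσ.1 (gσ.2 u)) u) * Matrix.det (A.submatrix id (gσ.1 ∘ gσ.2)) := by
    refine (Finset.sum_bij (fun gσ _ => gσ.1 ∘ gσ.2) ?_ ?_ ?_ ?_).symm
    · rintro ⟨g, σ⟩ hg
      simp only [Finset.mem_product, Finset.mem_filter, Finset.mem_univ, true_and] at hg ⊢
      exact (hg.1.injective).comp σ.injective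
    · rintro ⟨g, σ⟩ hg ⟨g', σ'⟩ hg' h
      simp only [Finset.mem_product, Finset.mem_filter, Finset.mem_univ, true_and] at hg hg'
      have h0 : g ∘ ⇑σ = g' ∘ ⇑σ' := h
      have hgg' : g = g' := by
        have h1 : Set.range (g ∘ σ) = Set.range (g' ∘ σ') := by rw [h0]
        rw [Set.range_comp, Set.range_comp, σ.surjective.range_eq, σ'.surjective.range_eq,
          Set.image_univ, Set.image_univ] at h1
        haveI : WellFoundedLT (Fin s) := inferInstance
        exact (StrictMono.range_inj hg.1 hg'.1).mp h1
      subst hgg'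
      have hσ : σ = σ' := by
        ext u
        have h2 : g (σ u) = g (σ' u) := congrFun h0 u
        exact congrArg Fin.val (hg.1.injective h2)
      rw [hσ]
    · intro p hp
      simp only [Finset.mem_filter, Finset.mem_univ, true_and] at hp
      set K : Finset (Fin t) := Finset.image p Finset.univ with hKdef
      have hK : K.card = s := by
        rw [hKdef, Finset.card_image_of_injective _ hp, Finset.card_univ, Fintype.card_fin]
      set e := K.orderIsoOfFin hK with he
      have hmem : ∀ u, p u ∈ K := fun u => Finset.mem_image_of_mem p (Finset.mem_univ u)
      have hinj : Function.Injective (fun u => e.symm ⟨p u, hmem u⟩) := by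
        intro u v huv
        simp only at huv
        have := congrArg (fun x => ((e x : K) : Fin t)) huv
        simp only [OrderIso.apply_symm_apply] at this
        exact hp this
      have hbij := Finite.injective_iff_bijective.mp hinj
      refine ⟨⟨(K.orderEmbOfFin hK : Fin s → Fin t), Equiv.ofBijective _ hbij⟩, ?_, ?_⟩
      · simp only [Finset.mem_product, Finset.mem_filter, Finset.mem_univ, true_and, and_true]
        exact (K.orderEmbOfFin hK).strictMono
      · funext u
        simp only [Function.comp_apply, Equiv.ofBijective_apply]
        rw [← Finset.coe_orderIsoOfFin_apply, ← he, OrderIso.apply_symm_apply]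
    · rintro ⟨g, σ⟩ hg
      rfl
  rw [step1, step2, step3, Finset.sum_product]
  refine Finset.sum_congr rfl fun g hg => ?_
  have hgm : StrictMono g := by simpa using hg
  calc (∑ σ : Perm (Fin s), (∏ u, B (g (σ u)) u) * Matrix.det (A.submatrix id (g ∘ σ)))
      = ∑ σ : Perm (Fin s), (∏ u, B (g (σ u)) u) *
          (ε σ * Matrix.det (A.submatrix id g)) := by
        refine Finset.sum_congr rfl fun σ _ => ?_
        have : A.submatrix id (g ∘ σ) = (A.submatrix id g).submatrix id σ := by
          rw [Matrix.submatrix_submatrix]; rfl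
        rw [this, Matrix.det_permute' σ (A.submatrix id g)]
    _ = Matrix.det (A.submatrix id g) * ∑ σ : Perm (Fin s),
          ε σ * ∏ u, (B.submatrix g id) (σ u) u := by
        rw [Finset.mul_sum]
        refine Finset.sum_congr rfl fun σ _ => ?_
        simp only [Matrix.submatrix_apply, id_eq]
        ring
    _ = Matrix.det (A.submatrix id g) * Matrix.det (B.submatrix g id) := by
        rw [← Matrix.det_apply']


variable {R : Type*} [CommRing R]

lemma det_expand_single_row {n : ℕ} (A : Matrix (Fin (n+1)) (Fin (n+1)) R)
    (h : ∀ j : Fin (n+1), j ≠ 0 → A 0 j = 0) :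
    A.det = A 0 0 * (A.submatrix Fin.succ Fin.succ).det := by
  rw [Matrix.det_succ_row_zero, Fin.sum_univ_succ]
  have h2 : ∀ j : Fin n, (-1 : R) ^ ((j.succ : Fin (n+1)) : ℕ) * A 0 j.succ *
      (A.submatrix Fin.succ (Fin.succAbove j.succ)).det = 0 := by
    intro j; rw [h j.succ (Fin.succ_ne_zero j)]; ring
  rw [Finset.sum_congr rfl fun j _ => h2 j]
  simp [Fin.succAbove_zero]

lemma det_expand_single_col {n : ℕ} (A : Matrix (Fin (n+1)) (Fin (n+1)) R)
    (h : ∀ i : Fin (n+1), i ≠ 0 → A i 0 = 0) :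
    A.det = A 0 0 * (A.submatrix Fin.succ Fin.succ).det := by
  rw [Matrix.det_succ_column_zero, Fin.sum_univ_succ]
  have h2 : ∀ i : Fin n, (-1 : R) ^ ((i.succ : Fin (n+1)) : ℕ) * A i.succ 0 *
      (A.submatrix (Fin.succAbove i.succ) Fin.succ).det = 0 := by
    intro i; rw [h i.succ (Fin.succ_ne_zero i)]; ring
  rw [Finset.sum_congr rfl fun i _ => h2 i]
  simp [Fin.succAbove_zero]

lemma succAbove_one_succ {n : ℕ} (v : Fin n) :
    (1 : Fin (n+2)).succAbove v.succ = v.succ.succ := by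
  have : (1 : Fin (n+2)) = (0 : Fin (n+1)).succ := rfl
  rw [this, Fin.succ_succAbove_succ, Fin.succAbove_zero]

lemma det_expand_two {n : ℕ} (A : Matrix (Fin (n+2)) (Fin (n+2)) R)
    (hrow : ∀ j : Fin (n+2), 2 ≤ (j : ℕ) → A 0 j = 0)
    (hcol : ∀ i : Fin (n+2), 2 ≤ (i : ℕ) → A i 0 = 0) :
    A.det = A 0 0 * (A.submatrix Fin.succ Fin.succ).det
      - A 0 1 * A 1 0 * (A.submatrix (Fin.succ ∘ Fin.succ) (Fin.succ ∘ Fin.succ)).det := by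
  rw [Matrix.det_succ_row_zero, Fin.sum_univ_succ, Fin.sum_univ_succ]
  have h2 : ∀ j : Fin n, (-1 : R) ^ ((j.succ.succ : Fin (n+2)) : ℕ) * A 0 j.succ.succ *
      (A.submatrix Fin.succ (Fin.succAbove j.succ.succ)).det = 0 := by
    intro j
    rw [hrow j.succ.succ (by simp [Fin.val_succ])]
    ring
  rw [Finset.sum_congr rfl fun j _ => h2 j]
  have hB : (A.submatrix Fin.succ (Fin.succAbove (0 : Fin (n+1)).succ)).det =
      A 1 0 * (A.submatrix (Fin.succ ∘ Fin.succ) (Fin.succ ∘ Fin.succ)).det := by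
    have e1 : (0 : Fin (n+1)).succ = (1 : Fin (n+2)) := rfl
    rw [e1]
    have hz : ∀ i : Fin (n+1), i ≠ 0 →
        (A.submatrix Fin.succ (Fin.succAbove (1 : Fin (n+2)))) i 0 = 0 := by
      intro i hi
      show A (Fin.succ i) ((1 : Fin (n+2)).succAbove 0) = 0
      rw [Fin.one_succAbove_zero]
      apply hcol
      have h1 : 0 < i := Fin.pos_of_ne_zero hi
      have h2 : 0 < (i : ℕ) := h1
      simp only [Fin.val_succ]
      omega
    rw [det_expand_single_col _ hz]
    have hA00 : A.submatrix Fin.succ (Fin.succAbove 1) 0 0 = A 1 0 := by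
      show A (Fin.succ 0) ((1 : Fin (n+2)).succAbove 0) = A 1 0
      rw [Fin.one_succAbove_zero, Fin.succ_zero_eq_one]
    have hsub : (A.submatrix Fin.succ (Fin.succAbove 1)).submatrix Fin.succ Fin.succ
        = A.submatrix (Fin.succ ∘ Fin.succ) (Fin.succ ∘ Fin.succ) := by
      rw [Matrix.submatrix_submatrix]
      exact congrArg (A.submatrix (Fin.succ ∘ Fin.succ)) (funext succAbove_one_succ)
    rw [hA00, hsub]
  rw [hB]
  simp only [Fin.succAbove_zero, Fin.val_zero, pow_zero, one_mul, Fin.val_succ, Fin.val_one,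
    pow_one, add_zero, Fin.succ_zero_eq_one, Finset.sum_const_zero]
  ring

/-- The tridiagonal production matrix. -/
noncomputable def Mq (e f : ℝ) (j k : ℕ) : Polynomial ℝ :=
  if j = k then (if j = 0 then Polynomial.C (f - e) + Polynomial.C e * Polynomial.X
    else 1 + Polynomial.X)
  else if j = k + 1 then (if k = 0 then Polynomial.C f * Polynomial.X else Polynomial.X)
  else if k = j + 1 then 1
  else 0

variable {e f : ℝ}

lemma Mq_zero_right {j k : ℕ} (h : j + 2 ≤ k) : Mq e f j k = 0 := by
  unfold Mq
  rw [if_neg (by omega), if_neg (by omega), if_neg (by omega)]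

lemma Mq_zero_left {j k : ℕ} (h : k + 2 ≤ j) : Mq e f j k = 0 := by
  unfold Mq
  rw [if_neg (by omega), if_neg (by omega), if_neg (by omega)]

lemma Mq_diag {a : ℕ} (ha : 1 ≤ a) : Mq e f a a = 1 + Polynomial.X := by
  unfold Mq
  rw [if_pos rfl, if_neg (by omega)]

lemma Mq_00 : Mq e f 0 0 = Polynomial.C (f - e) + Polynomial.C e * Polynomial.X := by
  unfold Mq
  rw [if_pos rfl, if_pos rfl]

lemma Mq_super (j : ℕ) : Mq e f j (j + 1) = 1 := by
  unfold Mq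
  rw [if_neg (by omega), if_neg (by omega), if_pos rfl]

lemma Mq_sub {k : ℕ} (hk : 1 ≤ k) : Mq e f (k + 1) k = Polynomial.X := by
  unfold Mq
  rw [if_neg (by omega), if_pos rfl, if_neg (by omega)]

lemma Mq_10 : Mq e f 1 0 = Polynomial.C f * Polynomial.X := by
  unfold Mq
  rw [if_neg (by omega), if_pos rfl, if_pos rfl]

lemma Mq_QN (he : 0 ≤ e) (hef : e ≤ f) (j k : ℕ) : QN (Mq e f j k) := by
  unfold Mq
  split_ifs
  · exact (QN_C (by linarith)).add ((QN_C he).mul QN_X)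
  · exact QN_one.add QN_X
  · exact (QN_C (by linarith)).mul QN_X
  · exact QN_X
  · exact QN_one
  · exact QN_zero

/-- Minor of the production matrix. -/
noncomputable def Dm (e f : ℝ) (s : ℕ) (K L : Fin s → ℕ) : Polynomial ℝ :=
  Matrix.det (Matrix.of fun u v : Fin s => Mq e f (K u) (L v))

lemma Dm_zero (K L : Fin 0 → ℕ) : Dm e f 0 K L = 1 := Matrix.det_isEmpty

lemma Dm_one (K L : Fin 1 → ℕ) : Dm e f 1 K L = Mq e f (K 0) (L 0) :=
  Matrix.det_fin_one _

lemma Dm_row {n : ℕ} (K L : Fin (n+1) → ℕ)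
    (h : ∀ v : Fin (n+1), v ≠ 0 → Mq e f (K 0) (L v) = 0) :
    Dm e f (n+1) K L = Mq e f (K 0) (L 0) * Dm e f n (K ∘ Fin.succ) (L ∘ Fin.succ) :=
  det_expand_single_row _ h

lemma Dm_col {n : ℕ} (K L : Fin (n+1) → ℕ)
    (h : ∀ u : Fin (n+1), u ≠ 0 → Mq e f (K u) (L 0) = 0) :
    Dm e f (n+1) K L = Mq e f (K 0) (L 0) * Dm e f n (K ∘ Fin.succ) (L ∘ Fin.succ) :=
  det_expand_single_col _ h

lemma Dm_two {n : ℕ} (K L : Fin (n+2) → ℕ)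
    (hrow : ∀ v : Fin (n+2), 2 ≤ (v : ℕ) → Mq e f (K 0) (L v) = 0)
    (hcol : ∀ u : Fin (n+2), 2 ≤ (u : ℕ) → Mq e f (K u) (L 0) = 0) :
    Dm e f (n+2) K L = Mq e f (K 0) (L 0) *
        Dm e f (n+1) (K ∘ Fin.succ) (L ∘ Fin.succ)
      - Mq e f (K 0) (L 1) * Mq e f (K 1) (L 0) *
        Dm e f n (K ∘ Fin.succ ∘ Fin.succ) (L ∘ Fin.succ ∘ Fin.succ) :=
  det_expand_two _ hrow hcol

lemma Dm_row_zero {n : ℕ} (K L : Fin (n+1) → ℕ)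
    (h : ∀ v : Fin (n+1), Mq e f (K 0) (L v) = 0) :
    Dm e f (n+1) K L = 0 :=
  Matrix.det_eq_zero_of_row_eq_zero 0 h

lemma Dm_col_zero {n : ℕ} (K L : Fin (n+1) → ℕ)
    (h : ∀ u : Fin (n+1), Mq e f (K u) (L 0) = 0) :
    Dm e f (n+1) K L = 0 :=
  Matrix.det_eq_zero_of_column_eq_zero 0 h

lemma fin_val_mono {n : ℕ} {K : Fin n → ℕ} (hK : StrictMono K) {u v : Fin n}
    (h : (u : ℕ) < (v : ℕ)) : K u < K v := hK h

lemma Mq_minor_main (he : 0 ≤ e) (hef : e ≤ f) : ∀ n : ℕ,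
    (∀ K L : Fin n → ℕ, StrictMono K → StrictMono L → QN (Dm e f n K L)) ∧
    (∀ K L : Fin (n+1) → ℕ, StrictMono K → StrictMono L → K 0 = L 0 → 1 ≤ K 0 →
      QN (Dm e f (n+1) K L -
          Polynomial.X * Dm e f n (K ∘ Fin.succ) (L ∘ Fin.succ)) ∧
      QN (Dm e f (n+1) K L - Dm e f n (K ∘ Fin.succ) (L ∘ Fin.succ))) := by
  intro n
  induction n using Nat.strong_induction_on with
  | _ n ih =>
  have part1 : ∀ K L : Fin n → ℕ, StrictMono K → StrictMono L → QN (Dm e f n K L) := by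
    match n, ih with
    | 0, _ =>
      intro K L _ _
      rw [Dm_zero]
      exact QN_one
    | (m+1), ih =>
      intro K L hK hL
      have hvpos : ∀ v : Fin (m+1), v ≠ 0 → L 0 < L v := by
        intro v hv
        exact fin_val_mono hL (by simpa using Fin.pos_of_ne_zero hv)
      have hupos : ∀ u : Fin (m+1), u ≠ 0 → K 0 < K u := by
        intro u hu
        exact fin_val_mono hK (by simpa using Fin.pos_of_ne_zero hu)
      rcases lt_trichotomy (K 0) (L 0) with hlt | heq | hgt
      · by_cases h2 : L 0 ≤ K 0 + 1
        · -- L 0 = K 0 + 1 : single nonzero entry in row 0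
          rw [Dm_row K L (fun v hv => Mq_zero_right (by have := hvpos v hv; omega))]
          exact (Mq_QN he hef _ _).mul
            ((ih m (by omega)).1 _ _ (hK.comp Fin.strictMono_succ) (hL.comp Fin.strictMono_succ))
        · rw [Dm_row_zero K L (fun v => ?_)]
          · exact QN_zero
          · by_cases hv : v = 0
            · subst hv; exact Mq_zero_right (by omega)
            · exact Mq_zero_right (by have := hvpos v hv; omega)
      · -- K 0 = L 0
        match m, ih with
        | 0, _ =>
          rw [Dm_one]
          exact Mq_QN he hef _ _
        | (m'+1), ih =>
          have hv1 : ∀ v : Fin (m'+2), 2 ≤ (v : ℕ) → L 1 < L v := by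
            intro v hv
            refine fin_val_mono hL ?_
            have : ((1 : Fin (m'+2)) : ℕ) = 1 := rfl
            omega
          have hu1 : ∀ u : Fin (m'+2), 2 ≤ (u : ℕ) → K 1 < K u := by
            intro u hu
            refine fin_val_mono hK ?_
            have : ((1 : Fin (m'+2)) : ℕ) = 1 := rfl
            omega
          have hL1 : L 0 < L 1 := fin_val_mono hL (by norm_num)
          have hK1 : K 0 < K 1 := fin_val_mono hK (by norm_num)
          by_cases hb1 : L 1 = K 0 + 1
          · by_cases ha1 : K 1 = K 0 + 1
            · -- hard case
              have hsplit := Dm_two (e := e) (f := f) K L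
                (fun v hv => Mq_zero_right (by have := hv1 v hv; omega))
                (fun u hu => Mq_zero_left (by have := hu1 u hu; omega))
              set D2 := Dm e f (m'+1) (K ∘ Fin.succ) (L ∘ Fin.succ) with hD2def
              set D3 := Dm e f m' (K ∘ Fin.succ ∘ Fin.succ) (L ∘ Fin.succ ∘ Fin.succ)
                with hD3def
              have hQND2 : QN D2 :=
                (ih (m'+1) (by omega)).1 _ _ (hK.comp Fin.strictMono_succ)
                  (hL.comp Fin.strictMono_succ)
              have h22 := (ih m' (by omega)).2 (K ∘ Fin.succ) (L ∘ Fin.succ)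
                (hK.comp Fin.strictMono_succ) (hL.comp Fin.strictMono_succ)
                (by simp only [Function.comp_apply, Fin.succ_zero_eq_one]; omega)
                (by simp only [Function.comp_apply, Fin.succ_zero_eq_one]; omega)
              have h22a : QN (D2 - Polynomial.X * D3) := h22.1
              have h22b : QN (D2 - D3) := h22.2
              have hMsuper : Mq e f (K 0) (L 1) = 1 := by rw [hb1]; exact Mq_super _
              rcases Nat.eq_zero_or_pos (K 0) with h0 | h1
              · have hMdiag : Mq e f (K 0) (L 0) =
                    Polynomial.C (f - e) + Polynomial.C e * Polynomial.X := by
                  rw [← heq, h0]; exact Mq_00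
                have hMsub : Mq e f (K 1) (L 0) = Polynomial.C f * Polynomial.X := by
                  rw [← heq, ha1, h0]; exact Mq_10
                have hCfe : Polynomial.C (f - e) =
                    Polynomial.C f - Polynomial.C e := by rw [map_sub]
                have hfinal : Dm e f (m'+2) K L =
                    Polynomial.C (f - e) * (D2 - Polynomial.X * D3) +
                      (Polynomial.C e * Polynomial.X) * (D2 - D3) := by
                  rw [hsplit, hMdiag, hMsuper, hMsub, hCfe]; ring
                rw [hfinal]
                exact ((QN_C (by linarith)).mul h22a).add (((QN_C he).mul QN_X).mul h22b)
              · have hMdiag : Mq e f (K 0) (L 0) = 1 + Polynomial.X := by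
                  rw [← heq]; exact Mq_diag h1
                have hMsub : Mq e f (K 1) (L 0) = Polynomial.X := by
                  rw [← heq, ha1]; exact Mq_sub h1
                have hfinal : Dm e f (m'+2) K L =
                    (D2 - Polynomial.X * D3) + Polynomial.X * D2 := by
                  rw [hsplit, hMdiag, hMsuper, hMsub]; ring
                rw [hfinal]
                exact h22a.add (QN_X.mul hQND2)
            · -- K 1 ≥ K 0 + 2 : single column
              rw [Dm_col K L (fun u hu => Mq_zero_left ?_)]
              · exact (Mq_QN he hef _ _).mul
                  ((ih (m'+1) (by omega)).1 _ _ (hK.comp Fin.strictMono_succ)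
                    (hL.comp Fin.strictMono_succ))
              · by_cases hu2 : 2 ≤ (u : ℕ)
                · have := hu1 u hu2; omega
                · have hu1' : (u : ℕ) = 1 := by
                    have := Fin.pos_of_ne_zero hu
                    simp only [Fin.lt_def, Fin.val_zero] at this
                    omega
                  have : u = 1 := by
                    apply Fin.ext
                    rw [hu1']; rfl
                  subst this
                  omega
          · -- L 1 ≥ K 0 + 2 : single row
            rw [Dm_row K L (fun v hv => Mq_zero_right ?_)]
            · exact (Mq_QN he hef _ _).mul
                ((ih (m'+1) (by omega)).1 _ _ (hK.comp Fin.strictMono_succ)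
                  (hL.comp Fin.strictMono_succ))
            · by_cases hv2 : 2 ≤ (v : ℕ)
              · have := hv1 v hv2; omega
              · have hv1' : (v : ℕ) = 1 := by
                  have := Fin.pos_of_ne_zero hv
                  simp only [Fin.lt_def, Fin.val_zero] at this
                  omega
                have : v = 1 := by
                  apply Fin.ext
                  rw [hv1']; rfl
                subst this
                omega
      · -- L 0 < K 0, symmetric
        by_cases h2 : K 0 ≤ L 0 + 1
        · rw [Dm_col K L (fun u hu => Mq_zero_left (by have := hupos u hu; omega))]
          exact (Mq_QN he hef _ _).mul
            ((ih m (by omega)).1 _ _ (hK.comp Fin.strictMono_succ) (hL.comp Fin.strictMono_succ))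
        · rw [Dm_col_zero K L (fun u => ?_)]
          · exact QN_zero
          · by_cases hu : u = 0
            · subst hu; exact Mq_zero_left (by omega)
            · exact Mq_zero_left (by have := hupos u hu; omega)
  refine ⟨part1, ?_⟩
  intro K L hK hL hab ha1
  match n, part1, ih with
  | 0, _, _ =>
    rw [Dm_one, Dm_zero, ← hab, Mq_diag ha1]
    constructor
    · have h : (1 + Polynomial.X) - Polynomial.X * 1 = (1 : Polynomial ℝ) := by ring
      rw [h]; exact QN_one
    · have h : (1 + Polynomial.X) - 1 = (Polynomial.X : Polynomial ℝ) := by ring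
      rw [h]; exact QN_X
  | (m+1), part1, ih =>
    have hv1 : ∀ v : Fin (m+2), 2 ≤ (v : ℕ) → L 1 < L v := by
      intro v hv
      refine fin_val_mono hL ?_
      have : ((1 : Fin (m+2)) : ℕ) = 1 := rfl
      omega
    have hu1 : ∀ u : Fin (m+2), 2 ≤ (u : ℕ) → K 1 < K u := by
      intro u hu
      refine fin_val_mono hK ?_
      have : ((1 : Fin (m+2)) : ℕ) = 1 := rfl
      omega
    have hL1 : L 0 < L 1 := fin_val_mono hL (by norm_num)
    have hK1 : K 0 < K 1 := fin_val_mono hK (by norm_num)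
    have hMdiag : Mq e f (K 0) (L 0) = 1 + Polynomial.X := by
      rw [← hab]; exact Mq_diag ha1
    set D2 := Dm e f (m+1) (K ∘ Fin.succ) (L ∘ Fin.succ) with hD2def
    have hQND2 : QN D2 :=
      part1 _ _ (hK.comp Fin.strictMono_succ) (hL.comp Fin.strictMono_succ)
    by_cases hb1 : L 1 = K 0 + 1
    · by_cases ha1' : K 1 = K 0 + 1
      · -- hard case
        have hsplit := Dm_two (e := e) (f := f) K L
          (fun v hv => Mq_zero_right (by have := hv1 v hv; omega))
          (fun u hu => Mq_zero_left (by have := hu1 u hu; omega))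
        set D3 := Dm e f m (K ∘ Fin.succ ∘ Fin.succ) (L ∘ Fin.succ ∘ Fin.succ) with hD3def
        have h22 := (ih m (by omega)).2 (K ∘ Fin.succ) (L ∘ Fin.succ)
          (hK.comp Fin.strictMono_succ) (hL.comp Fin.strictMono_succ)
          (by simp only [Function.comp_apply, Fin.succ_zero_eq_one]; omega)
          (by simp only [Function.comp_apply, Fin.succ_zero_eq_one]; omega)
        have hMsuper : Mq e f (K 0) (L 1) = 1 := by rw [hb1]; exact Mq_super _
        have hMsub : Mq e f (K 1) (L 0) = Polynomial.X := by
          rw [← hab, ha1']; exact Mq_sub ha1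
        constructor
        · have hfinal : Dm e f (m+2) K L - Polynomial.X * D2 = D2 - Polynomial.X * D3 := by
            rw [hsplit, hMdiag, hMsuper, hMsub]; ring
          rw [hfinal]; exact h22.1
        · have hfinal : Dm e f (m+2) K L - D2 =
              Polynomial.X * (D2 - D3) := by
            rw [hsplit, hMdiag, hMsuper, hMsub]; ring
          rw [hfinal]; exact QN_X.mul h22.2
      · -- single column
        have hsplit := Dm_col (e := e) (f := f) K L (fun u hu => Mq_zero_left ?_)
        rotate_left
        · by_cases hu2 : 2 ≤ (u : ℕ)
          · have := hu1 u hu2; omega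
          · have hu1' : (u : ℕ) = 1 := by
              have := Fin.pos_of_ne_zero hu
              simp only [Fin.lt_def, Fin.val_zero] at this
              omega
            have : u = 1 := by
              apply Fin.ext
              rw [hu1']; rfl
            subst this
            omega
        constructor
        · have hfinal : Dm e f (m+2) K L - Polynomial.X * D2 = D2 := by
            rw [hsplit, hMdiag]; ring
          rw [hfinal]; exact hQND2
        · have hfinal : Dm e f (m+2) K L - D2 = Polynomial.X * D2 := by
            rw [hsplit, hMdiag]; ring
          rw [hfinal]; exact QN_X.mul hQND2
    · -- single row
      have hsplit := Dm_row (e := e) (f := f) K L (fun v hv => Mq_zero_right ?_)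
      rotate_left
      · by_cases hv2 : 2 ≤ (v : ℕ)
        · have := hv1 v hv2; omega
        · have hv1' : (v : ℕ) = 1 := by
            have := Fin.pos_of_ne_zero hv
            simp only [Fin.lt_def, Fin.val_zero] at this
            omega
          have : v = 1 := by
            apply Fin.ext
            rw [hv1']; rfl
          subst this
          omega
      constructor
      · have hfinal : Dm e f (m+2) K L - Polynomial.X * D2 = D2 := by
          rw [hsplit, hMdiag]; ring
        rw [hfinal]; exact hQND2
      · have hfinal : Dm e f (m+2) K L - D2 = Polynomial.X * D2 := by
          rw [hsplit, hMdiag]; ring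
        rw [hfinal]; exact QN_X.mul hQND2

section Triangle

variable {c : ℕ → ℕ → Polynomial ℝ}

lemma entry_prod
    (hrec0 : ∀ n : ℕ, c (n + 1) 0 =
      (Polynomial.C (f - e) + Polynomial.C e * Polynomial.X) * c n 0
        + Polynomial.C f * Polynomial.X * c n 1)
    (hrec : ∀ n k : ℕ, c (n + 1) (k + 1) =
      c n k + (1 + Polynomial.X) * c n (k + 1) + Polynomial.X * c n (k + 2))
    (n k t : ℕ) (ht : k + 2 ≤ t) :
    c (n + 1) k = ∑ j ∈ Finset.range t, c n j * Mq e f j k := by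
  cases k with
  | zero =>
    have hsub : ∑ j ∈ Finset.range t, c n j * Mq e f j 0
        = ∑ j ∈ Finset.range 2, c n j * Mq e f j 0 := by
      refine (Finset.sum_subset (Finset.range_subset_range.mpr (by omega)) ?_).symm
      intro j hjt hj
      rw [Finset.mem_range] at hj
      push_neg at hj
      rw [Mq_zero_left (by omega), mul_zero]
    rw [hsub, Finset.sum_range_succ, Finset.sum_range_succ, Finset.sum_range_zero,
      Mq_00, Mq_10, hrec0 n]
    ring
  | succ k =>
    have hsub : ∑ j ∈ Finset.range t, c n j * Mq e f j (k+1)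
        = ∑ j ∈ Finset.range (k+3), c n j * Mq e f j (k+1) := by
      refine (Finset.sum_subset (Finset.range_subset_range.mpr (by omega)) ?_).symm
      intro j hjt hj
      rw [Finset.mem_range] at hj
      push_neg at hj
      rw [Mq_zero_left (by omega), mul_zero]
    have e3 : k + 3 = (k + 2) + 1 := rfl
    have e2 : k + 2 = (k + 1) + 1 := rfl
    rw [hsub, e3, Finset.sum_range_succ, e2, Finset.sum_range_succ, Finset.sum_range_succ]
    have h0 : ∑ j ∈ Finset.range k, c n j * Mq e f j (k+1) = 0 :=
      Finset.sum_eq_zero fun j hj => by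
        rw [Finset.mem_range] at hj
        rw [Mq_zero_right (by omega), mul_zero]
    rw [h0, Mq_super k, Mq_diag (by omega : 1 ≤ k + 1),
      (by exact Mq_sub (by omega) : Mq e f (k+2) (k+1) = Polynomial.X), hrec n k]
    ring

lemma A_minor (he : 0 ≤ e) (hef : e ≤ f)
    (h00 : c 0 0 = 1)
    (hz : ∀ n k : ℕ, n < k → c n k = 0)
    (hrec0 : ∀ n : ℕ, c (n + 1) 0 =
      (Polynomial.C (f - e) + Polynomial.C e * Polynomial.X) * c n 0
        + Polynomial.C f * Polynomial.X * c n 1)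
    (hrec : ∀ n k : ℕ, c (n + 1) (k + 1) =
      c n k + (1 + Polynomial.X) * c n (k + 1) + Polynomial.X * c n (k + 2)) :
    ∀ N s : ℕ, ∀ I K : Fin s → ℕ, StrictMono I → StrictMono K →
      s + ∑ u, I u ≤ N →
      QN (Matrix.det (Matrix.of fun u v : Fin s => c (I u) (K v))) := by
  intro N
  induction N using Nat.strong_induction_on with
  | _ N ihN =>
  intro s I K hI hK hbound
  match s, I, K, hI, hK, hbound with
  | 0, I, K, _, _, _ =>
    rw [Matrix.det_isEmpty]
    exact QN_one
  | (s'+1), I, K, hI, hK, hbound =>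
  rcases Nat.eq_zero_or_pos (I 0) with hI0 | hI0
  · rcases Nat.eq_zero_or_pos (K 0) with hK0 | hK0
    · -- expand along row 0 : single entry c 0 0 = 1
      rw [det_expand_single_row (Matrix.of fun u v : Fin (s'+1) => c (I u) (K v)) ?_]
      · have hA00 : (Matrix.of fun u v : Fin (s'+1) => c (I u) (K v)) 0 0 = 1 := by
          show c (I 0) (K 0) = 1
          rw [hI0, hK0, h00]
        rw [hA00, one_mul]
        have hsum : ∑ u, I u = I 0 + ∑ u : Fin s', I (Fin.succ u) := Fin.sum_univ_succ I
        exact ihN (s' + ∑ u : Fin s', I (Fin.succ u)) (by omega) s' (I ∘ Fin.succ) (K ∘ Fin.succ)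
          (hI.comp Fin.strictMono_succ) (hK.comp Fin.strictMono_succ) (le_refl _)
      · intro j hj
        show c (I 0) (K j) = 0
        have : K 0 < K j := hK (Fin.pos_of_ne_zero hj)
        exact hz _ _ (by omega)
    · rw [Matrix.det_eq_zero_of_row_eq_zero 0 fun j => ?_]
      · exact QN_zero
      · show c (I 0) (K j) = 0
        have : K 0 ≤ K j := hK.monotone (Fin.zero_le j)
        exact hz _ _ (by omega)
  · -- all rows positive : factor through the production matrix
    have hIu : ∀ u : Fin (s'+1), 1 ≤ I u := fun u =>
      le_trans hI0 (hI.monotone (Fin.zero_le u))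
    set t : ℕ := K (Fin.last s') + 2 with htdef
    set P : Matrix (Fin (s'+1)) (Fin t) (Polynomial ℝ) :=
      Matrix.of fun u j => c (I u - 1) (j : ℕ) with hP
    set Q : Matrix (Fin t) (Fin (s'+1)) (Polynomial ℝ) :=
      Matrix.of fun j v => Mq e f (j : ℕ) (K v) with hQ
    have hmat : (Matrix.of fun u v : Fin (s'+1) => c (I u) (K v)) =
        Matrix.of fun u v : Fin (s'+1) => ∑ j : Fin t, P u j * Q j v := by
      refine Matrix.ext fun u v => ?_
      show c (I u) (K v) = _
      have hKv : K v + 2 ≤ t := by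
        have : K v ≤ K (Fin.last s') := hK.monotone (Fin.le_last v)
        omega
      have hIu' : I u = (I u - 1) + 1 := by have := hIu u; omega
      rw [hIu', entry_prod hrec0 hrec (I u - 1) (K v) t hKv,
        ← Fin.sum_univ_eq_sum_range]
      rfl
    rw [hmat, cauchy_binet P Q]
    refine QN_sum _ _ fun g hg => ?_
    have hgm : StrictMono g := by
      classical
      simpa using hg
    refine QN.mul ?_ ?_
    · -- minor of the triangle with smaller rows
      have hbound2 : (s' + 1) + ∑ u, (I u - 1) < N := by
        have h1 : ∑ u, I u = ∑ u, (I u - 1) + (s' + 1) := by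
          calc ∑ u, I u = ∑ u, ((I u - 1) + 1) :=
                Finset.sum_congr rfl fun u _ => by have := hIu u; omega
            _ = ∑ u, (I u - 1) + ∑ _u : Fin (s'+1), 1 := Finset.sum_add_distrib
            _ = ∑ u, (I u - 1) + (s' + 1) := by simp
        omega
      exact ihN ((s'+1) + ∑ u, (I u - 1)) hbound2 (s'+1) (fun u => I u - 1)
        (fun v => (g v : ℕ))
        (fun u v huv => by
          show I u - 1 < I v - 1
          have h1 := hI huv; have h2 := hIu u; omega)
        (fun u v huv => by
          show ((g u : ℕ)) < ((g v : ℕ))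
          exact_mod_cast hgm huv)
        (le_refl _)
    · -- minor of the production matrix
      exact (Mq_minor_main he hef (s'+1)).1 (fun u => (g u : ℕ)) K
        (fun u v huv => by
          show ((g u : ℕ)) < ((g v : ℕ))
          exact_mod_cast hgm huv) hK

end Triangle

noncomputable def lam (f : ℝ) (k : ℕ) : Polynomial ℝ :=
  if k = 0 then 1 else Polynomial.C f * Polynomial.X ^ k

lemma lam_zero : lam f 0 = 1 := rfl

lemma lam_succ (k : ℕ) : lam f (k + 1) = Polynomial.C f * Polynomial.X ^ (k + 1) := rfl

lemma lam_QN (hf : 0 ≤ f) (k : ℕ) : QN (lam f k) := by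
  unfold lam
  split_ifs
  · exact QN_one
  · exact (QN_C hf).mul (QN_pow QN_X _)

section Hankel

variable {c : ℕ → ℕ → Polynomial ℝ}

lemma swap_sum
    (hz : ∀ n k : ℕ, n < k → c n k = 0)
    (hrec0 : ∀ n : ℕ, c (n + 1) 0 =
      (Polynomial.C (f - e) + Polynomial.C e * Polynomial.X) * c n 0
        + Polynomial.C f * Polynomial.X * c n 1)
    (hrec : ∀ n k : ℕ, c (n + 1) (k + 1) =
      c n k + (1 + Polynomial.X) * c n (k + 1) + Polynomial.X * c n (k + 2))
    (i j t' : ℕ) (hi : i + 1 < t' + 1) (hj : j < t' + 1) :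
    ∑ k ∈ Finset.range (t' + 1), lam f k * c (i + 1) k * c j k
      = ∑ k ∈ Finset.range (t' + 1), lam f k * c i k * c (j + 1) k := by
  set F : ℕ → Polynomial ℝ :=
    fun k => Polynomial.C f * Polynomial.X ^ (k + 1) * c i k * c j (k + 1) with hF
  set G : ℕ → Polynomial ℝ :=
    fun k => Polynomial.C f * Polynomial.X ^ (k + 1) * c i (k + 1) * c j k with hG
  set B : ℕ → Polynomial ℝ :=
    fun k => Polynomial.C f * Polynomial.X ^ (k + 1) * (1 + Polynomial.X) *
      c i (k + 1) * c j (k + 1) with hB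
  have hL : ∑ k ∈ Finset.range (t' + 1), lam f k * c (i + 1) k * c j k
      = (∑ k ∈ Finset.range t', (F k + B k + G (k + 1)))
        + ((Polynomial.C (f - e) + Polynomial.C e * Polynomial.X) * c i 0
            + Polynomial.C f * Polynomial.X * c i 1) * c j 0 := by
    rw [Finset.sum_range_succ']
    congr 1
    · refine Finset.sum_congr rfl fun k _ => ?_
      rw [lam_succ, hrec i k, hF, hG, hB]
      simp only []
      ring
    · rw [lam_zero, hrec0 i]
      ring
  have hR : ∑ k ∈ Finset.range (t' + 1), lam f k * c i k * c (j + 1) k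
      = (∑ k ∈ Finset.range t', (G k + B k + F (k + 1)))
        + c i 0 * ((Polynomial.C (f - e) + Polynomial.C e * Polynomial.X) * c j 0
            + Polynomial.C f * Polynomial.X * c j 1) := by
    rw [Finset.sum_range_succ']
    congr 1
    · refine Finset.sum_congr rfl fun k _ => ?_
      rw [lam_succ, hrec j k, hF, hG, hB]
      simp only []
      ring
    · rw [lam_zero, hrec0 j]
      ring
  have hsplitL : ∑ k ∈ Finset.range t', (F k + B k + G (k + 1))
      = (∑ k ∈ Finset.range t', F k) + (∑ k ∈ Finset.range t', B k)
        + ∑ k ∈ Finset.range t', G (k + 1) := by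
    rw [Finset.sum_add_distrib, Finset.sum_add_distrib]
  have hsplitR : ∑ k ∈ Finset.range t', (G k + B k + F (k + 1))
      = (∑ k ∈ Finset.range t', G k) + (∑ k ∈ Finset.range t', B k)
        + ∑ k ∈ Finset.range t', F (k + 1) := by
    rw [Finset.sum_add_distrib, Finset.sum_add_distrib]
  have h1F := Finset.sum_range_succ F t'
  have h2F := Finset.sum_range_succ' F t'
  have h1G := Finset.sum_range_succ G t'
  have h2G := Finset.sum_range_succ' G t'
  have hFt : F t' = 0 := by
    rw [hF]
    simp only []
    rw [hz j (t' + 1) (by omega)]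
    ring
  have hGt : G t' = 0 := by
    rw [hG]
    simp only []
    rw [hz i (t' + 1) (by omega)]
    ring
  have hF0 : F 0 = Polynomial.C f * Polynomial.X ^ 1 * c i 0 * c j 1 := rfl
  have hG0 : G 0 = Polynomial.C f * Polynomial.X ^ 1 * c i 1 * c j 0 := rfl
  linear_combination hL + hsplitL + (h1G - h2G) + hGt - hR - hsplitR - (h1F - h2F) - hFt
    + hF0 - hG0

lemma hankel_entry
    (h00 : c 0 0 = 1)
    (hz : ∀ n k : ℕ, n < k → c n k = 0)
    (hrec0 : ∀ n : ℕ, c (n + 1) 0 =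
      (Polynomial.C (f - e) + Polynomial.C e * Polynomial.X) * c n 0
        + Polynomial.C f * Polynomial.X * c n 1)
    (hrec : ∀ n k : ℕ, c (n + 1) (k + 1) =
      c n k + (1 + Polynomial.X) * c n (k + 1) + Polynomial.X * c n (k + 2)) :
    ∀ i j t : ℕ, i + j < t →
      c (i + j) 0 = ∑ k ∈ Finset.range t, lam f k * c i k * c j k := by
  intro i
  induction i with
  | zero =>
    intro j t ht
    rw [zero_add]
    have hsub : ∑ k ∈ Finset.range t, lam f k * c 0 k * c j k
        = ∑ k ∈ Finset.range 1, lam f k * c 0 k * c j k := by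
      refine (Finset.sum_subset (Finset.range_subset_range.mpr (by omega)) ?_).symm
      intro k hkt hk
      rw [Finset.mem_range] at hk
      push_neg at hk
      rw [hz 0 k (by omega)]
      ring
    rw [hsub, Finset.sum_range_one, lam_zero, h00]
    ring
  | succ i ihi =>
    intro j t ht
    obtain ⟨t', rfl⟩ : ∃ t', t = t' + 1 := ⟨t - 1, by omega⟩
    rw [swap_sum hz hrec0 hrec i j t' (by omega) (by omega)]
    have hidx : i + 1 + j = i + (j + 1) := by omega
    rw [hidx]
    exact ihi (j + 1) (t' + 1) (by omega)

end Hankel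

end HankelAux

open HankelAux in
/-- For real numbers `f ≥ e ≥ 0`, the Hankel matrix `(c_{i+j,0}(q))_{i,j ≥ 0}` of the
first column of the Catalan–Stieltjes matrix defined by
`c_{n,0} = ((f-e) + e q) c_{n-1,0} + f q c_{n-1,1}` and
`c_{n,k} = c_{n-1,k-1} + (1+q) c_{n-1,k} + q c_{n-1,k+1}` (for `k ≥ 1`)
is `q`-totally positive: every minor has nonnegative coefficients. -/
theorem hankel_q_totally_positive_case1
    (e f : ℝ) (he : 0 ≤ e) (hef : e ≤ f)
    (c : ℕ → ℕ → Polynomial ℝ)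
    (h00 : c 0 0 = 1)
    (hz : ∀ n k : ℕ, n < k → c n k = 0)
    (hrec0 : ∀ n : ℕ, c (n + 1) 0 =
      (Polynomial.C (f - e) + Polynomial.C e * Polynomial.X) * c n 0
        + Polynomial.C f * Polynomial.X * c n 1)
    (hrec : ∀ n k : ℕ, c (n + 1) (k + 1) =
      c n k + (1 + Polynomial.X) * c n (k + 1) + Polynomial.X * c n (k + 2))
    (s : ℕ) (hs : 1 ≤ s)
    (i j : Fin s → ℕ) (hi : StrictMono i) (hj : StrictMono j) (m : ℕ) :
    0 ≤ (Matrix.det (Matrix.of fun u v : Fin s => c (i u + j v) 0)).coeff m := by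
  classical
  have hf : 0 ≤ f := le_trans he hef
  obtain ⟨s', rfl⟩ : ∃ s', s = s' + 1 := ⟨s - 1, by omega⟩
  set T : ℕ := i (Fin.last s') + j (Fin.last s') + 1 with hT
  set P : Matrix (Fin (s' + 1)) (Fin T) (Polynomial ℝ) :=
    Matrix.of fun u k => lam f (k : ℕ) * c (i u) (k : ℕ) with hP
  set Q : Matrix (Fin T) (Fin (s' + 1)) (Polynomial ℝ) :=
    Matrix.of fun k v => c (j v) (k : ℕ) with hQ
  have hmat : (Matrix.of fun u v : Fin (s' + 1) => c (i u + j v) 0) =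
      Matrix.of fun u v : Fin (s' + 1) => ∑ k : Fin T, P u k * Q k v := by
    refine Matrix.ext fun u v => ?_
    show c (i u + j v) 0 = _
    have hiu : i u ≤ i (Fin.last s') := hi.monotone (Fin.le_last u)
    have hjv : j v ≤ j (Fin.last s') := hj.monotone (Fin.le_last v)
    rw [hankel_entry h00 hz hrec0 hrec (i u) (j v) T (by omega),
      ← Fin.sum_univ_eq_sum_range]
    rfl
  have hQN : QN (Matrix.det (Matrix.of fun u v : Fin (s' + 1) => c (i u + j v) 0)) := by
    rw [hmat, cauchy_binet P Q]
    refine QN_sum _ _ fun g hg => ?_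
    have hgm : StrictMono g := by simpa using hg
    have hgval : StrictMono fun v : Fin (s' + 1) => ((g v : ℕ)) := fun u v huv => by
      show ((g u : ℕ)) < ((g v : ℕ))
      exact_mod_cast hgm huv
    refine QN.mul ?_ ?_
    · -- P-minor: column scaling by lam, then a minor of the triangle
      have hPsub : P.submatrix id g =
          Matrix.of fun u v : Fin (s' + 1) =>
            (fun v : Fin (s' + 1) => lam f ((g v : ℕ))) v *
            (Matrix.of fun u v : Fin (s' + 1) => c (i u) ((g v : ℕ))) u v := rfl
      rw [hPsub, Matrix.det_mul_row]
      refine QN.mul (QN_prod _ _ fun v _ => lam_QN hf _) ?_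
      exact A_minor he hef h00 hz hrec0 hrec
        ((s' + 1) + ∑ u, i u) (s' + 1) i (fun v => (g v : ℕ)) hi hgval (le_refl _)
    · -- Q-minor: transpose of a minor of the triangle
      rw [← Matrix.det_transpose]
      have hQsub : (Q.submatrix g id)ᵀ =
          Matrix.of fun u v : Fin (s' + 1) => c (j u) ((g v : ℕ)) := rfl
      rw [hQsub]
      exact A_minor he hef h00 hz hrec0 hrec
        ((s' + 1) + ∑ u, j u) (s' + 1) j (fun v => (g v : ℕ)) hj hgval (le_refl _)
  exact hQN m
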